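/- Let K be an infinite field and L/K a finite Galois extension. For any finite-dimensional commutative K-algebra M, the Galois cohomology group H¹(Gal(L/K), (L ⊗_K M)^×) vanishes. -/

import Mathlib

set_option synthInstance.maxHeartbeats 1000000
set_option maxHeartbeats 1000000

open TensorProduct

/-- The action of `σ ∈ Gal(L/K)` on the unit group of `L ⊗_K M`, through the first
factor. -/
noncomputable def galUnitsAction (K L M : Type*) [Field K] [Field L] [Algebra K L]
    [CommRing M] [Algebra K M] (σ : L ≃ₐ[K] L) :
    (L ⊗[K] M)ˣ →* (L ⊗[K] M)ˣ :=
  Units.map (Algebra.TensorProduct.congr σ (AlgEquiv.refl (R := K) (A₁ := M))).toAlgHom.toRingHom.toMonoidHom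

theorem mulLeft_sum' {R A : Type*} [CommSemiring R] [NonUnitalNonAssocSemiring A]
    [Module R A] [SMulCommClass R A A] [IsScalarTower R A A] {ι : Type*} (s : Finset ι)
    (f : ι → A) :
    LinearMap.mulLeft R (∑ i ∈ s, f i) = ∑ i ∈ s, LinearMap.mulLeft R (f i) := by
  ext x
  simp [Finset.sum_mul]

theorem mulLeft_smul' {R A : Type*} [CommSemiring R] [NonUnitalNonAssocSemiring A]
    [Module R A] [SMulCommClass R A A] [IsScalarTower R A A] (r : R) (a : A) :
    LinearMap.mulLeft R (r • a) = r • LinearMap.mulLeft R a := by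
  ext x
  simp [smul_mul_assoc]

theorem isUnit_mulLeft {R A : Type*} [CommSemiring R] [Semiring A] [Algebra R A] {a : A}
    (ha : IsUnit a) : IsUnit (LinearMap.mulLeft R a) := by
  obtain ⟨⟨u, v, huv, hvu⟩, rfl⟩ := ha
  exact ⟨⟨LinearMap.mulLeft R u, LinearMap.mulLeft R v,
    by ext x; simp [LinearMap.mulLeft_apply, ← mul_assoc, huv],
    by ext x; simp [LinearMap.mulLeft_apply, ← mul_assoc, hvu]⟩, rfl⟩

-- mulLeft of pure tensor is baseChange of mulLeft
theorem lmul_one_tmul {K A L : Type*} [Field K] [CommRing A] [Algebra K A]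
    [Field L] [Algebra K L] (a : A) :
    (LinearMap.mulLeft L ((1 : L) ⊗ₜ[K] a)) = (LinearMap.mulLeft K a).baseChange L := by
  ext z
  simp [LinearMap.mulLeft_apply, Algebra.TensorProduct.tmul_mul_tmul]

theorem exists_isUnit_of_baseChange {K A : Type*} [Field K] [Infinite K] [CommRing A]
    [Algebra K A] [FiniteDimensional K A] (L : Type*) [Field L] [Algebra K L]
    (F : A →ₗ[K] A) (y : L ⊗[K] A) (hy : IsUnit (F.baseChange L y)) :
    ∃ x : A, IsUnit (F x) := by
  classical
  let b : Module.Basis (Fin (Module.finrank K A)) K A := Module.finBasis K A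
  let Mk : Fin (Module.finrank K A) → Matrix _ _ K := fun k =>
    LinearMap.toMatrix b b (LinearMap.mulLeft K (F (b k)))
  let N : Matrix _ _ (MvPolynomial (Fin (Module.finrank K A)) K) :=
    Matrix.of fun i j => ∑ k, MvPolynomial.X k * MvPolynomial.C (Mk k i j)
  let P := N.det
  -- evaluation over K
  have hevalK : ∀ r : Fin (Module.finrank K A) → K,
      MvPolynomial.eval r P = LinearMap.det (LinearMap.mulLeft K (F (∑ k, r k • b k))) := by
    intro r
    have h1 : (MvPolynomial.eval r).mapMatrix N =
        LinearMap.toMatrix b b (LinearMap.mulLeft K (F (∑ k, r k • b k))) := by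
      rw [map_sum F]
      simp only [map_smul]
      rw [mulLeft_sum']
      simp only [mulLeft_smul', map_sum (LinearMap.toMatrix b b), map_smul]
      ext i j
      simp [Mk, N, Matrix.sum_apply, mul_comm]
    rw [← LinearMap.det_toMatrix b, ← h1, ← RingHom.map_det]
  -- evaluation over L
  have hevalL : ∀ s : Fin (Module.finrank K A) → L,
      MvPolynomial.eval s (MvPolynomial.map (algebraMap K L) P) =
        LinearMap.det (LinearMap.mulLeft L ((F.baseChange L) (∑ k, s k • (b.baseChange L) k))) := by
    intro s
    have h2 : ∀ k, LinearMap.toMatrix (b.baseChange L) (b.baseChange L)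
        (LinearMap.mulLeft L ((F.baseChange L) ((b.baseChange L) k))) =
        (Mk k).map (algebraMap K L) := by
      intro k
      have hb : (F.baseChange L) ((b.baseChange L) k) = (1 : L) ⊗ₜ[K] (F (b k)) := by
        simp [Module.Basis.baseChange_apply]
      rw [hb, lmul_one_tmul]
      ext i j
      rw [LinearMap.toMatrix_apply, Module.Basis.baseChange_apply, LinearMap.baseChange_tmul,
        Module.Basis.baseChange_repr_tmul]
      simp [Mk, LinearMap.toMatrix_apply, Algebra.algebraMap_eq_smul_one,
        Algebra.leftMulMatrix_eq_repr_mul]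
    have h1 : ((MvPolynomial.eval s).comp (MvPolynomial.map (algebraMap K L))).mapMatrix N =
        LinearMap.toMatrix (b.baseChange L) (b.baseChange L)
          (LinearMap.mulLeft L ((F.baseChange L) (∑ k, s k • (b.baseChange L) k))) := by
      rw [map_sum (F.baseChange L)]
      simp only [map_smul]
      rw [mulLeft_sum']
      simp only [mulLeft_smul', map_sum, map_smul, h2]
      ext i j
      simp [N, Matrix.sum_apply, mul_comm]
    rw [← LinearMap.det_toMatrix (b.baseChange L), ← h1, ← RingHom.map_det]
    simp [P]
  -- the polynomial is nonzero
  have hPne : P ≠ 0 := by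
    intro h0
    have hdet : LinearMap.det (LinearMap.mulLeft L (F.baseChange L y)) ≠ 0 :=
      isUnit_iff_ne_zero.mp (LinearMap.isUnit_det _ (isUnit_mulLeft hy))
    have hy' : y = ∑ k, (b.baseChange L).repr y k • (b.baseChange L) k :=
      ((b.baseChange L).sum_repr y).symm
    have h := hevalL ((b.baseChange L).repr y)
    rw [h0, map_zero, map_zero, ← hy'] at h
    exact hdet h.symm
  -- find a K-point
  obtain ⟨r, hr⟩ : ∃ r, MvPolynomial.eval r P ≠ 0 := by
    by_contra h
    push_neg at h
    exact hPne (MvPolynomial.funext fun r => by simp [h r])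
  refine ⟨∑ k, r k • b k, ?_⟩
  have hdet : LinearMap.det (LinearMap.mulLeft K (F (∑ k, r k • b k))) ≠ 0 := by
    rw [← hevalK]; exact hr
  have hsurj : Function.Surjective (LinearMap.mulLeft K (F (∑ k, r k • b k))) := by
    intro z
    obtain ⟨w, hw⟩ := (LinearMap.equivOfDetNeZero _ hdet).surjective z
    simp only [LinearMap.equivOfDetNeZero, LinearEquiv.ofIsUnitDet_apply] at hw
    exact ⟨w, hw⟩
  obtain ⟨v, hv⟩ := hsurj 1
  exact IsUnit.of_mul_eq_one v hv

section Gal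

variable (K L M : Type*) [Field K] [Field L] [Algebra K L]
  [CommRing M] [Algebra K M]

/-- Action of `σ` on `L ⊗ M` through the first factor. -/
noncomputable def conjT (σ : L ≃ₐ[K] L) : (L ⊗[K] M) ≃ₐ[K] (L ⊗[K] M) :=
  Algebra.TensorProduct.congr σ (AlgEquiv.refl (R := K) (A₁ := M))

variable {K L M}

theorem conjT_tmul (σ : L ≃ₐ[K] L) (ℓ : L) (m : M) :
    conjT K L M σ (ℓ ⊗ₜ[K] m) = σ ℓ ⊗ₜ[K] m := by
  simp [conjT, Algebra.TensorProduct.congr_apply]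

theorem conjT_mul (σ τ : L ≃ₐ[K] L) (x : L ⊗[K] M) :
    conjT K L M (σ * τ) x = conjT K L M σ (conjT K L M τ x) := by
  induction x with
  | zero => simp
  | tmul ℓ m => simp [conjT_tmul, AlgEquiv.mul_apply]
  | add a b ha hb => simp [ha, hb]

theorem conjT_one (x : L ⊗[K] M) : conjT K L M (1 : L ≃ₐ[K] L) x = x := by
  induction x with
  | zero => simp
  | tmul ℓ m => simp [conjT_tmul, AlgEquiv.one_apply]
  | add a b ha hb => simp [ha, hb]

variable (K L M) in
/-- The `τ`-component of the splitting map `L ⊗ (L ⊗ M) → ∏_τ (L ⊗ M)`. -/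
noncomputable def PhiC (τ : L ≃ₐ[K] L) : L ⊗[K] (L ⊗[K] M) →ₐ[K] L ⊗[K] M :=
  Algebra.TensorProduct.lift (Algebra.TensorProduct.includeLeft) (conjT K L M τ).toAlgHom
    (fun _ _ => Commute.all _ _)

theorem PhiC_tmul (τ : L ≃ₐ[K] L) (ℓ : L) (a : L ⊗[K] M) :
    PhiC K L M τ (ℓ ⊗ₜ[K] a) = (ℓ ⊗ₜ[K] (1 : M)) * conjT K L M τ a := by
  simp [PhiC, Algebra.TensorProduct.lift_tmul]

theorem PhiC_baseChange (τ σ : L ≃ₐ[K] L) (u : L ⊗[K] M) (z : L ⊗[K] (L ⊗[K] M)) :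
    PhiC K L M τ (((LinearMap.mulLeft K u).comp (conjT K L M σ).toLinearMap).baseChange L z) =
      conjT K L M τ u * PhiC K L M (τ * σ) z := by
  induction z with
  | zero => simp
  | tmul ℓ a =>
      rw [LinearMap.baseChange_tmul]
      simp only [LinearMap.coe_comp, Function.comp_apply, AlgEquiv.toLinearMap_apply,
        LinearMap.mulLeft_apply]
      rw [PhiC_tmul, PhiC_tmul, map_mul, conjT_mul]
      ring
  | add a b ha hb => simp [ha, hb, mul_add]

end Gal

section Main

variable (K L M : Type*) [Field K] [Field L] [Algebra K L]
  [FiniteDimensional K L] [IsGalois K L]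
  [CommRing M] [Algebra K M] [FiniteDimensional K M]

/-- The combined splitting map, as a linear map. -/
noncomputable def PhiAll : (L ⊗[K] (L ⊗[K] M)) →ₗ[K] ((L ≃ₐ[K] L) → L ⊗[K] M) :=
  LinearMap.pi fun τ => (PhiC K L M τ).toLinearMap

theorem PhiAll_bijective : Function.Bijective (PhiAll K L M) := by
  classical
  -- a basis of L indexed by the Galois group
  let e : Fin (Module.finrank K L) ≃ (L ≃ₐ[K] L) :=
    Fintype.equivOfCardEq (by rw [Fintype.card_fin, Fintype.card_eq_nat_card, IsGalois.card_aut_eq_finrank])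
  let bG : Module.Basis (L ≃ₐ[K] L) K L := (Module.finBasis K L).reindex e
  -- the matrix (τ (bG g)) is invertible, by Dedekind independence of characters
  have hB : IsUnit (Matrix.of fun τ g : L ≃ₐ[K] L => τ (bG g)).det := by
    rw [isUnit_iff_ne_zero]
    intro hdet
    obtain ⟨v, hv0, hv⟩ := Matrix.exists_vecMul_eq_zero_iff.mpr hdet
    have li : LinearIndependent L (fun f : L ≃ₐ[K] L => (f : L → L)) :=
      LinearIndependent.comp (ι' := L ≃ₐ[K] L)
        (linearIndependent_monoidHom L L) (fun f => f)
        (fun x y h => by ext; exact DFunLike.ext_iff.1 h _)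
    have hT : (∑ τ : L ≃ₐ[K] L, v τ • τ.toLinearMap) = (0 : L →ₗ[K] L) := by
      apply bG.ext
      intro g
      have := congr_fun hv g
      simpa [Matrix.vecMul, dotProduct] using this
    have : ∀ τ : L ≃ₐ[K] L, v τ = 0 := by
      have := Fintype.linearIndependent_iff.mp li v ?_
      · exact this
      · funext ℓ
        have := DFunLike.congr_fun hT ℓ
        simpa using this
    exact hv0 (funext this)
  -- injectivity
  have hinj : Function.Injective (PhiAll K L M) := by
    rw [← LinearMap.ker_eq_bot, LinearMap.ker_eq_bot']
    intro x hx
    -- write x via the surjection Ψ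
    let Theta : (L ≃ₐ[K] L) → (L ⊗[K] M) →ₗ[K] L ⊗[K] (L ⊗[K] M) := fun g =>
      TensorProduct.map LinearMap.id ((TensorProduct.mk K L M) (bG g))
    let Psi : ((L ≃ₐ[K] L) → L ⊗[K] M) →ₗ[K] L ⊗[K] (L ⊗[K] M) :=
      ∑ g : L ≃ₐ[K] L, (Theta g).comp (LinearMap.proj g)
    have hPsi : Function.Surjective Psi := by
      intro z
      induction z with
      | zero => exact ⟨0, map_zero _⟩
      | tmul ℓ a =>
          induction a with
          | zero => exact ⟨0, by rw [map_zero, tmul_zero]⟩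
          | tmul ℓ' m =>
              refine ⟨fun g => ℓ ⊗ₜ[K] ((bG.repr ℓ' g) • m), ?_⟩
              have : ∀ g : L ≃ₐ[K] L,
                  Theta g (ℓ ⊗ₜ[K] ((bG.repr ℓ' g) • m)) =
                    ℓ ⊗ₜ[K] (((bG.repr ℓ' g) • bG g) ⊗ₜ[K] m) := by
                intro g
                simp only [Theta, TensorProduct.map_tmul, LinearMap.id_apply,
                  TensorProduct.mk_apply, tmul_smul, smul_tmul']
                rw [smul_tmul, ← smul_tmul']
              simp only [Psi, LinearMap.sum_apply, LinearMap.coe_comp, Function.comp_apply,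
                LinearMap.proj_apply, this]
              rw [← tmul_sum, ← sum_tmul, bG.sum_repr]
          | add a b ha hb =>
              obtain ⟨wa, hwa⟩ := ha
              obtain ⟨wb, hwb⟩ := hb
              exact ⟨wa + wb, by rw [map_add, hwa, hwb, tmul_add]⟩
      | add a b ha hb =>
          obtain ⟨wa, hwa⟩ := ha
          obtain ⟨wb, hwb⟩ := hb
          exact ⟨wa + wb, by rw [map_add, hwa, hwb]⟩
    obtain ⟨w, rfl⟩ := hPsi x
    -- evaluate the components
    have hPhiTheta : ∀ (τ g : L ≃ₐ[K] L) (a : L ⊗[K] M),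
        PhiC K L M τ (Theta g a) = τ (bG g) • a := by
      intro τ g a
      induction a with
      | zero => simp
      | tmul ℓ' m =>
          simp only [Theta, TensorProduct.map_tmul, LinearMap.id_apply,
            TensorProduct.mk_apply]
          rw [PhiC_tmul, conjT_tmul]
          rw [Algebra.TensorProduct.tmul_mul_tmul]
          rw [smul_tmul', Algebra.smul_def]
          simp [Algebra.TensorProduct.algebraMap_apply, Algebra.TensorProduct.tmul_mul_tmul,
            mul_comm]
      | add a b ha hb => simp [ha, hb, smul_add]
    have hcomp : ∀ τ : L ≃ₐ[K] L, (∑ g : L ≃ₐ[K] L, τ (bG g) • w g) = 0 := by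
      intro τ
      have := congr_fun hx τ
      simpa [PhiAll, Psi, LinearMap.sum_apply, hPhiTheta] using this
    -- invert the matrix
    have hw : ∀ g : L ≃ₐ[K] L, w g = 0 := by
      let B : Matrix (L ≃ₐ[K] L) (L ≃ₐ[K] L) L := Matrix.of fun τ g => τ (bG g)
      have hBinv : B⁻¹ * B = 1 := Matrix.nonsing_inv_mul B hB
      intro i
      calc w i = ∑ g : L ≃ₐ[K] L, ((B⁻¹ * B) i g) • w g := by
            rw [hBinv]
            simp [Matrix.one_apply]
        _ = ∑ g : L ≃ₐ[K] L, ∑ τ : L ≃ₐ[K] L, (B⁻¹ i τ * B τ g) • w g := by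
            refine Finset.sum_congr rfl fun g _ => ?_
            rw [Matrix.mul_apply, Finset.sum_smul]
        _ = ∑ τ : L ≃ₐ[K] L, ∑ g : L ≃ₐ[K] L, (B⁻¹ i τ * B τ g) • w g := Finset.sum_comm
        _ = ∑ τ : L ≃ₐ[K] L, B⁻¹ i τ • ∑ g : L ≃ₐ[K] L, B τ g • w g := by
            refine Finset.sum_congr rfl fun τ _ => ?_
            rw [Finset.smul_sum]
            simp_rw [smul_smul]
        _ = 0 := by
            refine Finset.sum_eq_zero fun τ _ => ?_
            have h0 : ∑ g : L ≃ₐ[K] L, B τ g • w g = 0 := by simpa [B] using hcomp τ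
            rw [h0, smul_zero]
    have : w = 0 := funext hw
    rw [this, map_zero]
  -- surjectivity from equality of dimensions
  have hdim : Module.finrank K (L ⊗[K] (L ⊗[K] M)) =
      Module.finrank K ((L ≃ₐ[K] L) → L ⊗[K] M) := by
    rw [Module.finrank_tensorProduct, Module.finrank_pi_fintype]
    rw [Finset.sum_const, Finset.card_univ, Fintype.card_eq_nat_card, IsGalois.card_aut_eq_finrank, smul_eq_mul]
  exact ⟨hinj, (LinearMap.injective_iff_surjective_of_finrank_eq_finrank hdim).mp hinj⟩

end Main

section Main2

variable {K L M : Type*} [Field K] [Field L] [Algebra K L]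
  [FiniteDimensional K L] [IsGalois K L]
  [CommRing M] [Algebra K M] [FiniteDimensional K M]

theorem baseChange_sum' {R A M N : Type*} [CommRing R] [CommRing A] [Algebra R A]
    [AddCommGroup M] [Module R M] [AddCommGroup N] [Module R N]
    {ι : Type*} (s : Finset ι) (f : ι → (M →ₗ[R] N)) :
    (∑ i ∈ s, f i).baseChange A = ∑ i ∈ s, (f i).baseChange A := by
  simpa only [LinearMap.baseChangeHom_apply] using
    map_sum (LinearMap.baseChangeHom R A M N) f s

theorem isUnit_of_phiAll_unit {x : L ⊗[K] (L ⊗[K] M)}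
    (h : ∀ τ : L ≃ₐ[K] L, IsUnit (PhiC K L M τ x)) : IsUnit x := by
  classical
  obtain ⟨z, hz⟩ := (PhiAll_bijective K L M).2 (fun τ => (((h τ).unit⁻¹ : _) : L ⊗[K] M))
  have h1 : PhiAll K L M (x * z) = PhiAll K L M 1 := by
    funext τ
    have hzτ : PhiC K L M τ z = (((h τ).unit⁻¹ : _) : L ⊗[K] M) := congr_fun hz τ
    simp only [PhiAll, LinearMap.pi_apply, AlgHom.toLinearMap_apply, map_mul, map_one, hzτ]
    exact IsUnit.mul_val_inv (h τ)
  have := (PhiAll_bijective K L M).1 h1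
  exact IsUnit.of_mul_eq_one z this

end Main2

/-- let `K` be an infinite field, `L/K` a finite Galois extension, and `M`
a finite-dimensional commutative `K`-algebra.  Then
`H¹(Gal(L/K), (L ⊗_K M)^×) = 0`: every 1-cocycle is a coboundary. -/
theorem statement_16 (K L M : Type*) [Field K] [Infinite K] [Field L] [Algebra K L]
    [FiniteDimensional K L] [IsGalois K L]
    [CommRing M] [Algebra K M] [FiniteDimensional K M]
    (c : (L ≃ₐ[K] L) → (L ⊗[K] M)ˣ)
    (hc : ∀ σ τ : L ≃ₐ[K] L, c (σ * τ) = c σ * galUnitsAction K L M σ (c τ)) :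
    ∃ b : (L ⊗[K] M)ˣ, ∀ σ : L ≃ₐ[K] L, c σ = b * (galUnitsAction K L M σ b)⁻¹ := by
  classical
  have hact : ∀ (τ : L ≃ₐ[K] L) (u : (L ⊗[K] M)ˣ),
      ((galUnitsAction K L M τ u : (L ⊗[K] M)ˣ) : L ⊗[K] M) = conjT K L M τ (u : L ⊗[K] M) :=
    fun _ _ => rfl
  let F : (L ⊗[K] M) →ₗ[K] (L ⊗[K] M) :=
    ∑ σ : L ≃ₐ[K] L, (LinearMap.mulLeft K ((c σ : L ⊗[K] M))).comp (conjT K L M σ).toLinearMap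
  -- find a point over L where the twisted sum is a unit
  obtain ⟨x', hx'⟩ := (PhiAll_bijective K L M).2 (Pi.single (1 : L ≃ₐ[K] L) 1)
  have hx'c : ∀ ρ : L ≃ₐ[K] L, PhiC K L M ρ x' = if ρ = 1 then 1 else 0 := by
    intro ρ
    have h := congr_fun hx' ρ
    simpa [PhiAll, Pi.single_apply] using h
  have hFL : ∀ τ : L ≃ₐ[K] L, PhiC K L M τ (F.baseChange L x') = conjT K L M τ ((c τ⁻¹ : _) : L ⊗[K] M) := by
    intro τ
    have hsum : F.baseChange L x' = ∑ σ : L ≃ₐ[K] L,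
        ((LinearMap.mulLeft K ((c σ : L ⊗[K] M))).comp (conjT K L M σ).toLinearMap).baseChange L x' := by
      rw [show F.baseChange L = ∑ σ : L ≃ₐ[K] L,
        ((LinearMap.mulLeft K ((c σ : L ⊗[K] M))).comp (conjT K L M σ).toLinearMap).baseChange L
        from baseChange_sum' _ _]
      simp [LinearMap.sum_apply]
    rw [hsum, map_sum]
    simp_rw [PhiC_baseChange, hx'c]
    rw [Finset.sum_eq_single τ⁻¹]
    · simp
    · intro σ _ hσ
      rw [if_neg, mul_zero]
      intro hh
      exact hσ ((inv_eq_of_mul_eq_one_right hh).symm)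
    · intro hh
      exact absurd (Finset.mem_univ _) hh
  have hunit : IsUnit (F.baseChange L x') :=
    isUnit_of_phiAll_unit (fun τ => by
      rw [hFL]
      exact ((c τ⁻¹).isUnit).map _)
  obtain ⟨x, hx⟩ := exists_isUnit_of_baseChange L F _ hunit
  refine ⟨hx.unit, fun τ => ?_⟩
  have hFx : F x = ∑ σ : L ≃ₐ[K] L, (c σ : L ⊗[K] M) * conjT K L M σ x := by
    simp [F, LinearMap.sum_apply]
  have key : conjT K L M τ (F x) = (((c τ)⁻¹ : _) : L ⊗[K] M) * F x := by
    rw [hFx, map_sum]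
    have hterm : ∀ σ : L ≃ₐ[K] L,
        conjT K L M τ ((c σ : L ⊗[K] M) * conjT K L M σ x) =
          (((c τ)⁻¹ : _) : L ⊗[K] M) * ((c (τ*σ) : L ⊗[K] M) * conjT K L M (τ*σ) x) := by
      intro σ
      rw [map_mul, ← conjT_mul]
      have h2 : ((c (τ*σ) : _) : L ⊗[K] M) = (c τ : L ⊗[K] M) * conjT K L M τ (c σ : L ⊗[K] M) := by
        rw [hc τ σ, Units.val_mul, hact]
      rw [h2, mul_assoc, Units.inv_mul_cancel_left]
    rw [Finset.sum_congr rfl (fun σ _ => hterm σ), ← Finset.mul_sum]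
    congr 1
    exact Fintype.sum_equiv (Equiv.mulLeft τ) _ _ (fun σ => rfl)
  have hactb : galUnitsAction K L M τ hx.unit = (c τ)⁻¹ * hx.unit := by
    apply Units.ext
    rw [hact, Units.val_mul, IsUnit.unit_spec, key]
  rw [hactb, mul_inv_rev, inv_inv, mul_inv_cancel_left]
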